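/- Let n ≥ 4. If G is a 2-connected simple graph on n vertices with exactly n + 1 edges, then G is isomorphic to a theta graph θ_{a,b,c} for some a, b, c with a + b + c = n + 1. -/

import Mathlib

open SimpleGraph

/-- `G` is `ℓ`-connected: it has more than `ℓ` vertices and deleting any set of fewer than
`ℓ` vertices leaves a connected graph. -/
def LConnected {V : Type*} [Fintype V] (G : SimpleGraph V) (ℓ : ℕ) : Prop :=
  ℓ < Fintype.card V ∧
    ∀ s : Finset V, s.card < ℓ → (G.induce ((↑s : Set V)ᶜ)).Connected

/-- `G` is (equal to) the theta graph `θ_{a,b,c}`: there are two distinct vertices `v`, `w`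
joined by three internally disjoint, pairwise edge-disjoint paths of lengths `a`, `b`, `c`,
and these paths exhaust all vertices and edges of `G`. -/
def IsTheta {V : Type*} (G : SimpleGraph V) (a b c : ℕ) : Prop :=
  ∃ (v w : V) (_ : v ≠ w) (p q r : G.Walk v w),
    p.IsPath ∧ q.IsPath ∧ r.IsPath ∧
    p.length = a ∧ q.length = b ∧ r.length = c ∧
    (∀ x, x ∈ p.support → x ∈ q.support → x = v ∨ x = w) ∧
    (∀ x, x ∈ p.support → x ∈ r.support → x = v ∨ x = w) ∧
    (∀ x, x ∈ q.support → x ∈ r.support → x = v ∨ x = w) ∧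
    p.edges.Disjoint q.edges ∧ p.edges.Disjoint r.edges ∧ q.edges.Disjoint r.edges ∧
    (∀ x : V, x ∈ p.support ∨ x ∈ q.support ∨ x ∈ r.support) ∧
    (∀ e ∈ G.edgeSet, e ∈ p.edges ∨ e ∈ q.edges ∨ e ∈ r.edges)

namespace ThetaAux

set_option linter.unusedSectionVars false
set_option linter.unnecessarySimpa false
set_option linter.unusedVariables false

variable {V : Type*}

/-- In a path, the edges incident to the starting vertex determine the neighbor uniquely. -/
lemma edge_at_start {G : SimpleGraph V} {u v y z : V} (p : G.Walk u v)
    (hp : p.IsPath) (hy : s(u, y) ∈ p.edges) (hz : s(u, z) ∈ p.edges) : y = z := by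
  induction p with
  | nil => simp at hy
  | cons h q ih =>
    rw [Walk.edges_cons, List.mem_cons] at hy hz
    rw [Walk.cons_isPath_iff] at hp
    rcases hy with hy | hy
    · rcases hz with hz | hz
      · rw [← hz] at hy; exact (Sym2.congr_right.mp hy)
      · exact absurd (Walk.fst_mem_support_of_mem_edges q hz) hp.2
    · exact absurd (Walk.fst_mem_support_of_mem_edges q hy) hp.2

lemma edge_at_end {G : SimpleGraph V} {u v y z : V} (p : G.Walk u v)
    (hp : p.IsPath) (hy : s(v, y) ∈ p.edges) (hz : s(v, z) ∈ p.edges) : y = z := by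
  apply edge_at_start p.reverse hp.reverse <;>
    rw [Walk.edges_reverse, List.mem_reverse] <;> assumption

lemma end_mem_tail_support {G : SimpleGraph V} {a b : V} (q : G.Walk a b) (hab : a ≠ b) :
    b ∈ q.support.tail := by
  cases q with
  | nil => exact absurd rfl hab
  | cons h r => simpa using r.end_mem_support

lemma split_path [DecidableEq V] {G : SimpleGraph V} {w v z : V} (A : G.Walk w v)
    (hA : A.IsPath) (hz : z ∈ A.support) (hzv : z ≠ v) (hzw : z ≠ w) :
    v ∉ (A.takeUntil z hz).support ∧ w ∉ (A.dropUntil z hz).support := by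
  have hspec := A.take_spec hz
  have hsupp : A.support = (A.takeUntil z hz).support ++ (A.dropUntil z hz).support.tail := by
    conv_lhs => rw [← hspec]
    rw [Walk.support_append]
  have hnodup := hA.support_nodup
  rw [hsupp] at hnodup
  have hdisj := List.disjoint_of_nodup_append hnodup
  constructor
  · intro hv
    exact (hdisj hv) (end_mem_tail_support _ hzv)
  · intro hw
    have hw' : w ∈ z :: (A.dropUntil z hz).support.tail := by
      rw [← Walk.support_eq_cons]; exact hw
    rcases List.mem_cons.mp hw' with h | h
    · exact hzw h.symm
    · exact hdisj (Walk.start_mem_support _) h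

lemma walk_closed {W : Type*} {H : SimpleGraph W} (S : Set W)
    (hcl : ∀ z ∈ S, ∀ u, H.Adj z u → u ∈ S) {x y : W} (q : H.Walk x y) (hx : x ∈ S) :
    y ∈ S := by
  induction q with
  | nil => exact hx
  | cons h p ih => exact ih (hcl _ hx _ h)

section Deg

variable [Fintype V] {G : SimpleGraph V} [DecidableRel G.Adj]

/-- All edges at an internal degree-2 vertex of a path belong to the path. -/
lemma path_internal_edges {a b : V} (p : G.Walk a b) (hp : p.IsPath) {z : V}
    (hz : z ∈ p.support) (hza : z ≠ a) (hzb : z ≠ b) (hdeg : G.degree z = 2)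
    {y : V} (hy : G.Adj z y) : s(z, y) ∈ p.edges := by
  classical
  have hspec := p.take_spec hz
  set p1 := p.takeUntil z hz with hp1def
  set p2 := p.dropUntil z hz with hp2def
  have hedges : p.edges = p1.edges ++ p2.edges := by
    conv_lhs => rw [← hspec]
    rw [Walk.edges_append]
  have hp1 : p1.IsPath := hp.takeUntil hz
  have hp2 : p2.IsPath := hp.dropUntil hz
  obtain ⟨c1, hc1, q1, hq1⟩ := Walk.exists_eq_cons_of_ne hza p1.reverse
  have he1 : s(z, c1) ∈ p1.edges := by
    have : s(z, c1) ∈ p1.reverse.edges := by rw [hq1]; simp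
    rwa [Walk.edges_reverse, List.mem_reverse] at this
  obtain ⟨c2, hc2, q2, hq2⟩ := Walk.exists_eq_cons_of_ne hzb p2
  have he2 : s(z, c2) ∈ p2.edges := by rw [hq2]; simp
  have hnodup : (p1.edges ++ p2.edges).Nodup := hedges ▸ hp.isTrail.edges_nodup
  have hc12 : c1 ≠ c2 := by
    rintro rfl
    exact (List.disjoint_of_nodup_append hnodup) he1 he2
  have hsub : ({c1, c2} : Finset V) ⊆ G.neighborFinset z := by
    intro t ht
    rcases Finset.mem_insert.mp ht with rfl | ht
    · exact (G.mem_neighborFinset z t).mpr hc1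
    · rw [Finset.mem_singleton] at ht; subst ht
      exact (G.mem_neighborFinset z t).mpr hc2
  have hnbr : ({c1, c2} : Finset V) = G.neighborFinset z := by
    apply Finset.eq_of_subset_of_card_le hsub
    rw [G.card_neighborFinset_eq_degree, hdeg, Finset.card_pair hc12]
  have hym : y ∈ ({c1, c2} : Finset V) := by
    rw [hnbr]; exact (G.mem_neighborFinset z y).mpr hy
  rw [hedges, List.mem_append]
  rcases Finset.mem_insert.mp hym with rfl | hym
  · exact Or.inl he1
  · rw [Finset.mem_singleton] at hym; subst hym; exact Or.inr he2

/-- All edges at a degree-2 vertex of a cycle belong to the cycle. -/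
lemma cycle_internal_edges {u : V} (c : G.Walk u u) (hc : c.IsCycle) {z : V}
    (hz : z ∈ c.support) (hdeg : G.degree z = 2) {y : V} (hy : G.Adj z y) :
    s(z, y) ∈ c.edges := by
  classical
  have hmem : ∀ e, e ∈ (c.rotate z hz).edges ↔ e ∈ c.edges :=
    fun e => (c.rotate_edges z hz).mem_iff
  have hc' : (c.rotate z hz).IsCycle := hc.rotate hz
  set c' := c.rotate z hz with hc'def
  cases hq : c' with
  | nil => exact absurd (hq ▸ hc') (by intro h; exact h.ne_nil rfl)
  | @cons _ d1 _ hd1 q =>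
    have hqz : z ≠ d1 := hd1.ne
    have hnodup : c'.edges.Nodup := hc'.isTrail.edges_nodup
    have he1 : s(z, d1) ∈ c'.edges := by rw [hq]; simp
    obtain ⟨d2, hd2, r, hr⟩ := Walk.exists_eq_cons_of_ne hqz q.reverse
    have he2q : s(z, d2) ∈ q.edges := by
      have : s(z, d2) ∈ q.reverse.edges := by rw [hr]; simp
      rwa [Walk.edges_reverse, List.mem_reverse] at this
    have he2 : s(z, d2) ∈ c'.edges := by
      rw [hq, Walk.edges_cons]; exact List.mem_cons_of_mem _ he2q
    have hd12 : d1 ≠ d2 := by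
      rintro rfl
      rw [hq, Walk.edges_cons, List.nodup_cons] at hnodup
      exact hnodup.1 he2q
    have hsub : ({d1, d2} : Finset V) ⊆ G.neighborFinset z := by
      intro t ht
      rcases Finset.mem_insert.mp ht with rfl | ht
      · exact (G.mem_neighborFinset z t).mpr hd1
      · rw [Finset.mem_singleton] at ht; subst ht
        exact (G.mem_neighborFinset z t).mpr hd2
    have hnbr : ({d1, d2} : Finset V) = G.neighborFinset z := by
      apply Finset.eq_of_subset_of_card_le hsub
      rw [G.card_neighborFinset_eq_degree, hdeg, Finset.card_pair hd12]
    have hym : y ∈ ({d1, d2} : Finset V) := by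
      rw [hnbr]; exact (G.mem_neighborFinset z y).mpr hy
    rw [← hmem]
    rcases Finset.mem_insert.mp hym with rfl | hym
    · exact he1
    · rw [Finset.mem_singleton] at hym; subst hym; exact he2

lemma next_eq {x y y1 y2 : V} (hx : G.Adj x y) (hdy : G.degree y = 2)
    (h1 : G.Adj y y1) (h2 : G.Adj y y2) (hx1 : y1 ≠ x) (hx2 : y2 ≠ x) : y1 = y2 := by
  classical
  have hx1' : x ≠ y1 := fun h => hx1 h.symm
  have hsub : ({x, y1} : Finset V) ⊆ G.neighborFinset y := by
    intro t ht
    rcases Finset.mem_insert.mp ht with rfl | ht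
    · exact (G.mem_neighborFinset y t).mpr hx.symm
    · rw [Finset.mem_singleton] at ht; subst ht
      exact (G.mem_neighborFinset y t).mpr h1
  have hnbr : ({x, y1} : Finset V) = G.neighborFinset y := by
    apply Finset.eq_of_subset_of_card_le hsub
    rw [G.card_neighborFinset_eq_degree, hdy, Finset.card_pair hx1']
  have : y2 ∈ ({x, y1} : Finset V) := by
    rw [hnbr]; exact (G.mem_neighborFinset y y2).mpr h2
  rcases Finset.mem_insert.mp this with rfl | h
  · exact absurd rfl hx2
  · rw [Finset.mem_singleton] at h; exact h.symm

/-- Two paths to `w` from the same vertex with the same previous vertex, whose inner vertices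
all have degree 2, are equal. -/
lemma forced_eq {w : V} :
    ∀ {y : V} (p : G.Walk y w) {x : V} (hx : G.Adj x y) (q : G.Walk y w),
      (Walk.cons hx p).IsPath → (Walk.cons hx q).IsPath →
      (∀ z ∈ p.support, z ≠ w → G.degree z = 2) →
      (∀ z ∈ q.support, z ≠ w → G.degree z = 2) → p = q := by
  intro y p
  induction p with
  | nil =>
    intro x hx q hp hq _ _
    cases q with
    | nil => rfl
    | cons h r =>
      exfalso
      have hq' : (Walk.cons h r).IsPath := hq.of_cons
      rw [Walk.cons_isPath_iff] at hq'
      exact hq'.2 r.end_mem_support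
  | @cons y y1 w h1 p' ih =>
    intro x hx q hp hq hdp hdq
    have hyw : y ≠ w := by
      rintro rfl
      have hp0 := hp.of_cons
      rw [Walk.cons_isPath_iff] at hp0
      exact hp0.2 p'.end_mem_support
    cases q with
    | nil => exact absurd rfl hyw
    | @cons _ y2 _ h2 q' =>
      have hdy : G.degree y = 2 := hdp y (Walk.start_mem_support _) hyw
      have hx1 : y1 ≠ x := by
        rintro rfl
        rw [Walk.cons_isPath_iff] at hp
        exact hp.2 (by rw [Walk.support_cons]; exact List.mem_cons_of_mem _ p'.start_mem_support)
      have hx2 : y2 ≠ x := by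
        rintro rfl
        rw [Walk.cons_isPath_iff] at hq
        exact hq.2 (by rw [Walk.support_cons]; exact List.mem_cons_of_mem _ q'.start_mem_support)
      obtain rfl : y1 = y2 := next_eq hx hdy h1 h2 hx1 hx2
      have hres : p' = q' := by
        refine ih h1 q' hp.of_cons ?_ ?_ ?_
        · exact hq.of_cons
        · intro z hz hzw
          exact hdp z (by rw [Walk.support_cons]; exact List.mem_cons_of_mem _ hz) hzw
        · intro z hz hzw
          exact hdq z (by rw [Walk.support_cons]; exact List.mem_cons_of_mem _ hz) hzw
      rw [hres]

/-- Two forced paths from the same vertex with the same previous vertex must eventually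
hit each other's endpoint. -/
lemma forced_mem {a b : V} :
    ∀ {y : V} (p : G.Walk y a) {x : V} (hx : G.Adj x y) (q : G.Walk y b),
      (Walk.cons hx p).IsPath → (Walk.cons hx q).IsPath →
      (∀ z ∈ p.support, z ≠ a → G.degree z = 2) →
      (∀ z ∈ q.support, z ≠ b → G.degree z = 2) →
      a ∈ q.support ∨ b ∈ p.support := by
  intro y p
  induction p with
  | nil => intro x hx q _ _ _ _; exact Or.inl q.start_mem_support
  | @cons y y1 a h1 p' ih =>
    intro x hx q hp hq hdp hdq
    by_cases hya : y = a
    · subst hya; exact Or.inl q.start_mem_support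
    by_cases hyb : y = b
    · subst hyb; exact Or.inr (Walk.start_mem_support _)
    cases q with
    | nil => exact absurd rfl hyb
    | @cons _ y2 _ h2 q' =>
      have hdy : G.degree y = 2 := hdp y (Walk.start_mem_support _) hya
      have hx1 : y1 ≠ x := by
        rintro rfl
        rw [Walk.cons_isPath_iff] at hp
        exact hp.2 (by rw [Walk.support_cons]; exact List.mem_cons_of_mem _ p'.start_mem_support)
      have hx2 : y2 ≠ x := by
        rintro rfl
        rw [Walk.cons_isPath_iff] at hq
        exact hq.2 (by rw [Walk.support_cons]; exact List.mem_cons_of_mem _ q'.start_mem_support)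
      obtain rfl : y1 = y2 := next_eq hx hdy h1 h2 hx1 hx2
      have hres := ih h1 q' hp.of_cons hq.of_cons
        (fun z hz hzw => hdp z (by rw [Walk.support_cons]; exact List.mem_cons_of_mem _ hz) hzw)
        (fun z hz hzw => hdq z (by rw [Walk.support_cons]; exact List.mem_cons_of_mem _ hz) hzw)
      rcases hres with h | h
      · exact Or.inl (by rw [Walk.support_cons]; exact List.mem_cons_of_mem _ h)
      · exact Or.inr (by rw [Walk.support_cons]; exact List.mem_cons_of_mem _ h)

lemma reach_in_compl (s : Finset V)
    (hc : (G.induce ((↑s : Set V)ᶜ)).Connected) (S : Set V)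
    (hcl : ∀ z ∈ S, z ∉ s → ∀ u, G.Adj z u → u ∉ s → u ∈ S)
    {x y : V} (hxS : x ∈ S) (hx : x ∉ s) (hy : y ∉ s) : y ∈ S := by
  have hx' : x ∈ ((↑s : Set V)ᶜ) := by simpa
  have hy' : y ∈ ((↑s : Set V)ᶜ) := by simpa
  obtain ⟨q⟩ := hc.preconnected ⟨x, hx'⟩ ⟨y, hy'⟩
  exact walk_closed (H := G.induce ((↑s : Set V)ᶜ)) {z | (z : V) ∈ S}
    (by rintro ⟨z, hz⟩ hzS ⟨u, hu⟩ hadj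
        exact hcl z hzS (by simpa using hz) u (by simpa using hadj) (by simpa using hu)) q hxS

lemma exists_adj_avoid
    (hconn : ∀ s : Finset V, s.card < 2 → (G.induce ((↑s : Set V)ᶜ)).Connected)
    (s : Finset V) (hs : s.card < 2) {a b : V} (ha : a ∉ s) (hb : b ∉ s) (hab : a ≠ b) :
    ∃ y, G.Adj a y ∧ y ∉ s := by
  have hres : b ∈ {z : V | z = a ∨ ∃ y, G.Adj a y ∧ y ∉ s} := by
    refine reach_in_compl s (hconn s hs) _ ?_ (Or.inl rfl) ha hb
    rintro z (rfl | hw) hzs u hadj hus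
    · exact Or.inr ⟨u, hadj, hus⟩
    · exact Or.inr hw
  rcases hres with h | h
  · exact absurd h.symm hab
  · exact h

lemma min_degree_two
    (hconn : ∀ s : Finset V, s.card < 2 → (G.induce ((↑s : Set V)ᶜ)).Connected)
    (hcard : 4 ≤ Fintype.card V) (u : V) : 2 ≤ G.degree u := by
  classical
  by_contra h
  push_neg at h
  have hs : (G.neighborFinset u).card < 2 := by
    rw [G.card_neighborFinset_eq_degree]; omega
  have hins : (insert u (G.neighborFinset u)).card < Fintype.card V := by
    calc (insert u (G.neighborFinset u)).card ≤ (G.neighborFinset u).card + 1 :=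
          Finset.card_insert_le _ _
      _ < Fintype.card V := by omega
  have hne : ((insert u (G.neighborFinset u))ᶜ : Finset V).Nonempty := by
    rw [← Finset.card_pos, Finset.card_compl]; omega
  obtain ⟨b, hb⟩ := hne
  rw [Finset.mem_compl, Finset.mem_insert, not_or] at hb
  have hu : u ∉ G.neighborFinset u := by simp
  obtain ⟨y, hy, hys⟩ := exists_adj_avoid hconn _ hs hu hb.2 (fun h => hb.1 h.symm)
  exact hys ((G.mem_neighborFinset u y).mpr hy)

/-- A cycle through `v` avoiding a vertex `b ≠ v`, whose non-`v` vertices have degree 2,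
contradicts 2-connectivity. -/
lemma cycle_contra
    (hconn : ∀ s : Finset V, s.card < 2 → (G.induce ((↑s : Set V)ᶜ)).Connected)
    {v : V} (c : G.Walk v v) (hc : c.IsCycle)
    (hdeg : ∀ z ∈ c.support, z ≠ v → G.degree z = 2)
    {b : V} (hb : b ∉ c.support) (hbv : b ≠ v) : False := by
  classical
  cases hq : c with
  | nil => exact (hq ▸ hc).ne_nil rfl
  | @cons _ z0 _ h0 q =>
    have hz0 : z0 ∈ c.support := by
      rw [hq, Walk.support_cons]; exact List.mem_cons_of_mem _ q.start_mem_support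
    have hz0v : z0 ≠ v := h0.ne'
    have hbS : b ∈ {z : V | z ∈ c.support ∧ z ≠ v} := by
      refine reach_in_compl {v} (hconn {v} (by simp)) _ ?_ ⟨hz0, hz0v⟩
        (by simp [hz0v]) (by simp [hbv])
      rintro z ⟨hzc, hzv⟩ _ u hadj hus
      rw [Finset.mem_singleton] at hus
      exact ⟨Walk.snd_mem_support_of_mem_edges c
        (cycle_internal_edges c hc hzc (hdeg z hzc hzv) hadj), hus⟩
    exact hb hbS.1

/-- The arm construction: following forced edges starting from a neighbor of `v`, we either
reach `w` along a path, or close up a cycle at `v`. -/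
lemma arm_lemma [DecidableEq V] (v w x0 : V)
    (Hdeg : ∀ z, z ≠ v → z ≠ w → G.degree z = 2) :
    ∀ (m : ℕ) (x : V) (p : G.Walk x v), p.IsPath → x ≠ v →
      (w ∉ p.support ∨ w = v) → s(x0, v) ∈ p.edges →
      Fintype.card V + 1 ≤ p.support.length + m →
      (∃ A : G.Walk w v, A.IsPath ∧ s(x0, v) ∈ A.edges) ∨
      (∃ c : G.Walk v v, c.IsCycle ∧ ∀ z ∈ c.support, z = v ∨ z ≠ w) := by
  intro m
  induction m with
  | zero =>
    intro x p hp _ _ _ hlen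
    exfalso
    have := hp.support_nodup.length_le_card
    omega
  | succ m ih =>
    intro x p hp hxv hw hx0 hlen
    by_cases hxw : x = w
    · subst hxw; exact Or.inl ⟨p, hp, hx0⟩
    have hdx : (G.neighborFinset x).card = 2 := by
      rw [G.card_neighborFinset_eq_degree]; exact Hdeg x hxv hxw
    obtain ⟨x1, h1, p', rfl⟩ := Walk.exists_eq_cons_of_ne hxv p
    obtain ⟨a, b, hab, hnbr⟩ := Finset.card_eq_two.mp hdx
    have hx1mem : x1 ∈ G.neighborFinset x := (G.mem_neighborFinset x x1).mpr h1
    obtain ⟨y, hymem, hyx1⟩ : ∃ y, y ∈ G.neighborFinset x ∧ y ≠ x1 := by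
      rw [hnbr] at hx1mem ⊢
      rcases Finset.mem_insert.mp hx1mem with rfl | hx1b
      · exact ⟨b, by simp, fun h => hab h.symm⟩
      · rw [Finset.mem_singleton] at hx1b; subst hx1b
        exact ⟨a, by simp, hab⟩
    have hadjy : G.Adj x y := (G.mem_neighborFinset x y).mp hymem
    have hfirst : s(x, x1) ∈ (Walk.cons h1 p').edges := by simp
    by_cases hyv : y = v
    · subst hyv
      refine Or.inr ⟨Walk.cons hadjy.symm (Walk.cons h1 p'), ?_, ?_⟩
      · rw [Walk.cons_isCycle_iff]
        refine ⟨hp, fun hmem => ?_⟩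
        have : x1 = y := (edge_at_start _ hp (by rwa [Sym2.eq_swap] at hmem) (by simp)).symm
        exact hyx1 this.symm
      · intro z hz
        rw [Walk.support_cons] at hz
        rcases List.mem_cons.mp hz with rfl | hz
        · exact Or.inl rfl
        · rcases hw with hw | hw
          · exact Or.inr (fun h => hw (h ▸ hz))
          · by_cases hzv : z = y
            · exact Or.inl hzv
            · exact Or.inr (fun h => hzv (h.trans hw))
    by_cases hyw : y = w
    · subst hyw
      have hwsupp : y ∉ (Walk.cons h1 p').support := by
        rcases hw with hw | hw
        · exact hw
        · exact absurd hw hyv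
      exact Or.inl ⟨Walk.cons hadjy.symm (Walk.cons h1 p'),
        by rw [Walk.cons_isPath_iff]; exact ⟨hp, hwsupp⟩,
        by rw [Walk.edges_cons]; exact List.mem_cons_of_mem _ hx0⟩
    by_cases hysupp : y ∈ (Walk.cons h1 p').support
    · exfalso
      have hxy_edge : s(y, x) ∈ (Walk.cons h1 p').edges :=
        path_internal_edges _ hp hysupp hadjy.ne' hyv (Hdeg y hyv hyw) hadjy.symm
      have : y = x1 := edge_at_start _ hp (by rwa [Sym2.eq_swap] at hxy_edge) hfirst
      exact hyx1 this
    · have hres := ih y (Walk.cons hadjy.symm (Walk.cons h1 p'))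
        (by rw [Walk.cons_isPath_iff]; exact ⟨hp, hysupp⟩) hyv ?_
        (by rw [Walk.edges_cons]; exact List.mem_cons_of_mem _ hx0) ?_
      · exact hres
      · rcases hw with hw | hw
        · refine Or.inl ?_
          rw [Walk.support_cons]
          intro hmem
          rcases List.mem_cons.mp hmem with heq | h
          · exact hyw heq.symm
          · exact hw h
        · exact Or.inr hw
      · rw [Walk.support_cons, List.length_cons]
        omega

/-- The main pairwise lemma: two distinct arms meet only in the branch vertices. -/
lemma arms_internal_disjoint [DecidableEq V] {v w : V}
    (Hdeg : ∀ z, z ≠ v → z ≠ w → G.degree z = 2)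
    {x x' : V} (hxx' : x ≠ x') {A A' : G.Walk w v} (hA : A.IsPath) (hA' : A'.IsPath)
    (he : s(x, v) ∈ A.edges) (he' : s(x', v) ∈ A'.edges) :
    ∀ z, z ∈ A.support → z ∈ A'.support → z = v ∨ z = w := by
  intro z hz hz'
  by_contra hcon
  push_neg at hcon
  obtain ⟨hzv, hzw⟩ := hcon
  have hdz : G.degree z = 2 := Hdeg z hzv hzw
  obtain ⟨hvP1, hwP2⟩ := split_path A hA hz hzv hzw
  obtain ⟨hvQ1, hwQ2⟩ := split_path A' hA' hz' hzv hzw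
  set P1 := A.takeUntil z hz with hP1def
  set P2 := A.dropUntil z hz with hP2def
  set Q1 := A'.takeUntil z hz' with hQ1def
  set Q2 := A'.dropUntil z hz' with hQ2def
  have hspec : P1.append P2 = A := A.take_spec hz
  have hspec' : Q1.append Q2 = A' := A'.take_spec hz'
  have hP1 : P1.IsPath := hA.takeUntil hz
  have hP2 : P2.IsPath := hA.dropUntil hz
  have hQ1 : Q1.IsPath := hA'.takeUntil hz'
  have hQ2 : Q2.IsPath := hA'.dropUntil hz'
  have hedA : A.edges = P1.edges ++ P2.edges := by
    conv_lhs => rw [← hspec]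
    rw [Walk.edges_append]
  have hedA' : A'.edges = Q1.edges ++ Q2.edges := by
    conv_lhs => rw [← hspec']
    rw [Walk.edges_append]
  have hDA : P1.edges.Disjoint P2.edges :=
    List.disjoint_of_nodup_append (hedA ▸ hA.isTrail.edges_nodup)
  have hDA' : Q1.edges.Disjoint Q2.edges :=
    List.disjoint_of_nodup_append (hedA' ▸ hA'.isTrail.edges_nodup)
  obtain ⟨b1, hb1, s1, hs1⟩ := Walk.exists_eq_cons_of_ne hzw P1.reverse
  obtain ⟨a1, ha1, t1, ht1⟩ := Walk.exists_eq_cons_of_ne hzv P2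
  obtain ⟨b2, hb2, s2, hs2⟩ := Walk.exists_eq_cons_of_ne hzw Q1.reverse
  obtain ⟨a2, ha2, t2, ht2⟩ := Walk.exists_eq_cons_of_ne hzv Q2
  have heb1 : s(z, b1) ∈ P1.edges := by
    have : s(z, b1) ∈ P1.reverse.edges := by rw [hs1]; simp
    rwa [Walk.edges_reverse, List.mem_reverse] at this
  have hea1 : s(z, a1) ∈ P2.edges := by rw [ht1]; simp
  have heb2 : s(z, b2) ∈ Q1.edges := by
    have : s(z, b2) ∈ Q1.reverse.edges := by rw [hs2]; simp
    rwa [Walk.edges_reverse, List.mem_reverse] at this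
  have hea2 : s(z, a2) ∈ Q2.edges := by rw [ht2]; simp
  have hab1 : a1 ≠ b1 := by
    rintro rfl; exact hDA heb1 hea1
  have hab2 : a2 ≠ b2 := by
    rintro rfl; exact hDA' heb2 hea2
  have hnbr : G.neighborFinset z = {b1, a1} := by
    symm
    apply Finset.eq_of_subset_of_card_le
    · intro t ht
      rcases Finset.mem_insert.mp ht with rfl | ht
      · exact (G.mem_neighborFinset z t).mpr hb1
      · rw [Finset.mem_singleton] at ht; subst ht
        exact (G.mem_neighborFinset z t).mpr ha1
    · rw [G.card_neighborFinset_eq_degree, hdz, Finset.card_pair (Ne.symm hab1)]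
  have ha2mem : a2 = b1 ∨ a2 = a1 := by
    have : a2 ∈ G.neighborFinset z := (G.mem_neighborFinset z a2).mpr ha2
    rw [hnbr] at this
    simpa using this
  have hb2mem : b2 = b1 ∨ b2 = a1 := by
    have : b2 ∈ G.neighborFinset z := (G.mem_neighborFinset z b2).mpr hb2
    rw [hnbr] at this
    simpa using this
  have hsubt1 : t1.support ⊆ P2.support := by
    rw [ht1, Walk.support_cons]; exact List.subset_cons_self _ _
  have hsubt2 : t2.support ⊆ Q2.support := by
    rw [ht2, Walk.support_cons]; exact List.subset_cons_self _ _
  have hsubs1 : s1.support ⊆ P1.support := by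
    intro u hu
    have : u ∈ P1.reverse.support := by
      rw [hs1, Walk.support_cons]; exact List.mem_cons_of_mem _ hu
    rwa [Walk.support_reverse, List.mem_reverse] at this
  have hsubs2 : s2.support ⊆ Q1.support := by
    intro u hu
    have : u ∈ Q1.reverse.support := by
      rw [hs2, Walk.support_cons]; exact List.mem_cons_of_mem _ hu
    rwa [Walk.support_reverse, List.mem_reverse] at this
  have hdegt1 : ∀ u ∈ t1.support, u ≠ v → G.degree u = 2 := fun u hu huv =>
    Hdeg u huv (fun h => hwP2 (h ▸ hsubt1 hu))
  have hdegt2 : ∀ u ∈ t2.support, u ≠ v → G.degree u = 2 := fun u hu huv =>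
    Hdeg u huv (fun h => hwQ2 (h ▸ hsubt2 hu))
  have hdegs1 : ∀ u ∈ s1.support, u ≠ w → G.degree u = 2 := fun u hu huw =>
    Hdeg u (fun h => hvP1 (h ▸ hsubs1 hu)) huw
  have hdegs2 : ∀ u ∈ s2.support, u ≠ w → G.degree u = 2 := fun u hu huw =>
    Hdeg u (fun h => hvQ1 (h ▸ hsubs2 hu)) huw
  rcases ha2mem with rfl | rfl
  · -- `A'` runs backwards along `A`; contradiction via `forced_mem`
    have hres := forced_mem s1 hb1 t2 (hs1 ▸ hP1.reverse) (ht2 ▸ hQ2) hdegs1 hdegt2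
    rcases hres with h | h
    · exact hwQ2 (hsubt2 h)
    · exact hvP1 (hsubs1 h)
  · -- the two arms agree, contradicting `x ≠ x'`
    have ht12 : t1 = t2 := forced_eq t1 ha1 t2 (ht1 ▸ hP2) (ht2 ▸ hQ2) hdegt1 hdegt2
    obtain rfl : b2 = b1 := by
      rcases hb2mem with h | h
      · exact h
      · exact absurd h.symm hab2
    have hs12 : s1 = s2 := forced_eq s1 hb1 s2 (hs1 ▸ hP1.reverse) (hs2 ▸ hQ1.reverse)
      hdegs1 hdegs2
    have hPQ2 : P2 = Q2 := by rw [ht1, ht2, ht12]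
    have hPQ1 : P1 = Q1 := by
      have h' : P1.reverse = Q1.reverse := by rw [hs1, hs2, hs12]
      have h'' := congrArg Walk.reverse h'
      simpa [Walk.reverse_reverse] using h''
    have hAA : A = A' := by rw [← hspec, ← hspec', hPQ1, hPQ2]
    have hx'A : s(x', v) ∈ A.edges := by rw [hAA]; exact he'
    have : x = x' := by
      apply edge_at_end A hA
      · rw [Sym2.eq_swap]; exact he
      · rw [Sym2.eq_swap]; exact hx'A
    exact hxx' this

/-- In the (impossible) case of one vertex of degree 4 and the rest of degree 2. -/
lemma no_deg4 [DecidableEq V] (n : ℕ) (hcard : Fintype.card V = n)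
    (hconn : ∀ s : Finset V, s.card < 2 → (G.induce ((↑s : Set V)ᶜ)).Connected)
    (hEcard : G.edgeFinset.card = n + 1)
    {v : V} (hd4 : G.degree v = 4) (hrest : ∀ z, z ≠ v → G.degree z = 2) : False := by
  have hpos : 0 < (G.neighborFinset v).card := by
    rw [G.card_neighborFinset_eq_degree, hd4]; omega
  obtain ⟨x, hx⟩ := Finset.card_pos.mp hpos
  have hadj : G.Adj v x := (G.mem_neighborFinset v x).mp hx
  have hp0 : (Walk.cons hadj.symm (Walk.nil : G.Walk v v)).IsPath := by
    simp [Walk.cons_isPath_iff, hadj.ne']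
  rcases arm_lemma v v x (fun z hz _ => hrest z hz) (Fintype.card V) x _ hp0 hadj.ne'
      (Or.inr rfl) (by simp) (by simp) with ⟨A, hA, hAe⟩ | ⟨c, hc, _⟩
  · cases hAnil : A with
    | nil => rw [hAnil] at hAe; simp at hAe
    | cons h q =>
      have hA' : (Walk.cons h q).IsPath := hAnil ▸ hA
      rw [Walk.cons_isPath_iff] at hA'
      exact hA'.2 q.end_mem_support
  · by_cases hall : ∀ b, b ∈ c.support
    · have hsub : G.edgeFinset ⊆ c.edges.toFinset := by
        intro e he
        rw [mem_edgeFinset] at he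
        revert he
        refine Sym2.ind (fun a b he => ?_) e
        have hab : G.Adj a b := he
        rw [List.mem_toFinset]
        by_cases hav : a = v
        · subst hav
          have := cycle_internal_edges c hc (hall b) (hrest b hab.ne') hab.symm
          rwa [Sym2.eq_swap] at this
        · exact cycle_internal_edges c hc (hall a) (hrest a hav) hab
      have h1 : n + 1 ≤ c.edges.toFinset.card := hEcard ▸ Finset.card_le_card hsub
      have h2 : c.edges.toFinset.card ≤ c.edges.length := c.edges.toFinset_card_le
      have h3 : c.edges.length = c.length := Walk.length_edges c
      have h4 : c.length ≤ n := by
        have hn := hc.support_nodup.length_le_card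
        have hl := Walk.length_support c
        rw [List.length_tail, hl, hcard] at hn
        omega
      omega
    · push_neg at hall
      obtain ⟨b, hb⟩ := hall
      exact cycle_contra hconn c hc (fun z _ hzv => hrest z hzv)
        hb (fun h => hb (h ▸ c.start_mem_support))

lemma degree_dichotomy [DecidableEq V] (n : ℕ) (hcard : Fintype.card V = n)
    (hsum : ∑ z, G.degree z = 2 * n + 2) (hmin : ∀ z, 2 ≤ G.degree z) :
    (∃ v, G.degree v = 4 ∧ ∀ z, z ≠ v → G.degree z = 2) ∨
    (∃ v w, v ≠ w ∧ G.degree v = 3 ∧ G.degree w = 3 ∧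
      ∀ z, z ≠ v → z ≠ w → G.degree z = 2) := by
  set f : V → ℕ := fun z => G.degree z - 2 with hf
  have hfs : ∑ z, f z = 2 := by
    have h1 : ∑ z, G.degree z = ∑ z, (f z + 2) := by
      refine Finset.sum_congr rfl fun z _ => ?_
      have := hmin z; simp [hf]; omega
    rw [Finset.sum_add_distrib, Finset.sum_const, Finset.card_univ, hcard, smul_eq_mul] at h1
    omega
  set T := Finset.univ.filter (fun z => f z ≠ 0) with hT
  have hTsum : ∑ z ∈ T, f z = 2 := by rw [hT, Finset.sum_filter_ne_zero]; exact hfs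
  have hone : ∀ z ∈ T, 1 ≤ f z := by
    intro z hz; rw [hT, Finset.mem_filter] at hz; omega
  have hTcard : T.card ≤ 2 := by
    calc T.card = ∑ _z ∈ T, 1 := by simp
    _ ≤ ∑ z ∈ T, f z := Finset.sum_le_sum hone
    _ = 2 := hTsum
  have hTne : T.Nonempty := by
    rw [Finset.nonempty_iff_ne_empty]
    intro h; rw [h] at hTsum; simp at hTsum
  have hnotT : ∀ z, z ∉ T → G.degree z = 2 := by
    intro z hz
    rw [hT, Finset.mem_filter] at hz
    push_neg at hz
    have h1 := hz (Finset.mem_univ z)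
    have h2 := hmin z
    simp [hf] at *
    omega
  have h1 := hTne.card_pos
  interval_cases h : T.card
  · obtain ⟨v, hv⟩ := Finset.card_eq_one.mp h
    have hfv : f v = 2 := by rw [hv, Finset.sum_singleton] at hTsum; exact hTsum
    refine Or.inl ⟨v, ?_, fun z hz => hnotT z (by rw [hv, Finset.mem_singleton]; exact hz)⟩
    have := hmin v; simp [hf] at hfv; omega
  · obtain ⟨v, w, hvw, hvwT⟩ := Finset.card_eq_two.mp h
    have hsum2 : f v + f w = 2 := by rw [hvwT, Finset.sum_pair hvw] at hTsum; exact hTsum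
    have hvT : v ∈ T := by rw [hvwT]; simp
    have hwT : w ∈ T := by rw [hvwT]; simp
    have h1v := hone v hvT
    have h1w := hone w hwT
    have hfv : f v = 1 := by omega
    have hfw : f w = 1 := by omega
    refine Or.inr ⟨v, w, hvw, ?_, ?_, fun z hzv hzw => hnotT z ?_⟩
    · have := hmin v; simp [hf] at hfv; omega
    · have := hmin w; simp [hf] at hfw; omega
    · rw [hvwT, Finset.mem_insert, Finset.mem_singleton]; tauto

end Deg

end ThetaAux

open ThetaAux in
/-- A `2`-connected graph on `n ≥ 4` vertices with exactly `n + 1` edges is (isomorphic to) a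
theta graph `θ_{a,b,c}` for some `a`, `b`, `c` with `a + b + c = n + 1`. -/
theorem theta_of_two_connected_edges {V : Type*} [Fintype V] (n : ℕ) (hn : 4 ≤ n)
    (G : SimpleGraph V) (hcard : Fintype.card V = n)
    (hconn : LConnected G 2) (hedges : Nat.card G.edgeSet = n + 1) :
    ∃ a b c : ℕ, a + b + c = n + 1 ∧ IsTheta G a b c := by
  classical
  obtain ⟨hlt, hconn2⟩ := hconn
  have hcard4 : 4 ≤ Fintype.card V := by omega
  have hEcard : G.edgeFinset.card = n + 1 := by
    rw [SimpleGraph.edgeFinset_card, ← Nat.card_eq_fintype_card]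
    exact hedges
  have hsum : ∑ z, G.degree z = 2 * n + 2 := by
    rw [SimpleGraph.sum_degrees_eq_twice_card_edges, hEcard]; ring
  have hmin : ∀ z, 2 ≤ G.degree z := min_degree_two hconn2 hcard4
  rcases degree_dichotomy n hcard hsum hmin with ⟨v, hd4, hrest⟩ | ⟨v, w, hvw, hdv, hdw, Hdeg2⟩
  · exact absurd (no_deg4 n hcard hconn2 hEcard hd4 hrest) not_false
  · have hwv : w ≠ v := hvw.symm
    -- construction of the three arms
    have getArm : ∀ x : V, G.Adj v x → ∃ A : G.Walk w v, A.IsPath ∧ s(x, v) ∈ A.edges := by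
      intro x hx
      by_cases hxw : x = w
      · subst hxw
        exact ⟨Walk.cons hx.symm Walk.nil, by simp [Walk.cons_isPath_iff, hwv], by simp⟩
      · have hp0 : (Walk.cons hx.symm (Walk.nil : G.Walk v v)).IsPath := by
          simp [Walk.cons_isPath_iff, hx.ne']
        rcases arm_lemma v w x Hdeg2 (Fintype.card V) x _ hp0 hx.ne'
            (Or.inl (by
              rw [Walk.support_cons]
              intro hmem
              rcases List.mem_cons.mp hmem with h | h
              · exact hxw h.symm
              · simp at h; exact hwv h)) (by simp) (by simp) with harm | ⟨c, hc, hspec⟩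
        · exact harm
        · exfalso
          have hwsupp : w ∉ c.support := by
            intro h
            rcases hspec w h with h1 | h1
            · exact hvw h1.symm
            · exact h1 rfl
          refine cycle_contra hconn2 c hc ?_ hwsupp hwv
          intro z hz hzv
          rcases hspec z hz with h1 | h1
          · exact absurd h1 hzv
          · exact Hdeg2 z hzv h1
    have hnb3 : (G.neighborFinset v).card = 3 := by
      rw [G.card_neighborFinset_eq_degree, hdv]
    obtain ⟨x1, x2, x3, h12, h13, h23, hnbrv⟩ := Finset.card_eq_three.mp hnb3
    have hvx : ∀ y ∈ ({x1, x2, x3} : Finset V), G.Adj v y := by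
      intro y hy
      apply (G.mem_neighborFinset v y).mp
      rw [hnbrv]; exact hy
    obtain ⟨A1, hA1, he1⟩ := getArm x1 (hvx x1 (by simp))
    obtain ⟨A2, hA2, he2⟩ := getArm x2 (hvx x2 (by simp))
    obtain ⟨A3, hA3, he3⟩ := getArm x3 (hvx x3 (by simp))
    have hint12 := arms_internal_disjoint Hdeg2 h12 hA1 hA2 he1 he2
    have hint13 := arms_internal_disjoint Hdeg2 h13 hA1 hA3 he1 he3
    have hint23 := arms_internal_disjoint Hdeg2 h23 hA2 hA3 he2 he3
    -- vertex coverage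
    set S : Set V := {z | z ∈ A1.support ∨ z ∈ A2.support ∨ z ∈ A3.support} with hS
    have hx1S : x1 ∈ A1.support := Walk.fst_mem_support_of_mem_edges A1 he1
    have hx2S : x2 ∈ A2.support := Walk.fst_mem_support_of_mem_edges A2 he2
    have hx3S : x3 ∈ A3.support := Walk.fst_mem_support_of_mem_edges A3 he3
    have hclose : ∀ z ∈ S, z ≠ w → ∀ u, G.Adj z u → u ∈ S := by
      intro z hzS hzw u hu
      by_cases hzv : z = v
      · rw [hzv] at hu
        have hum : u ∈ ({x1, x2, x3} : Finset V) := by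
          rw [← hnbrv]; exact (G.mem_neighborFinset v u).mpr hu
        rcases Finset.mem_insert.mp hum with rfl | hum
        · exact Or.inl hx1S
        rcases Finset.mem_insert.mp hum with rfl | hum
        · exact Or.inr (Or.inl hx2S)
        rw [Finset.mem_singleton] at hum; subst hum
        exact Or.inr (Or.inr hx3S)
      · have hdz := Hdeg2 z hzv hzw
        rcases hzS with h | h | h
        · exact Or.inl (Walk.snd_mem_support_of_mem_edges A1
            (path_internal_edges A1 hA1 h hzw hzv hdz hu))
        · exact Or.inr (Or.inl (Walk.snd_mem_support_of_mem_edges A2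
            (path_internal_edges A2 hA2 h hzw hzv hdz hu)))
        · exact Or.inr (Or.inr (Walk.snd_mem_support_of_mem_edges A3
            (path_internal_edges A3 hA3 h hzw hzv hdz hu)))
    have hvS : v ∈ S := Or.inl A1.end_mem_support
    have hcover : ∀ b, b ∈ S := by
      intro b
      by_cases hbw : b = w
      · subst hbw; exact Or.inl A1.start_mem_support
      · refine reach_in_compl {w} (hconn2 {w} (by simp)) S ?_ hvS (by simp [hvw]) (by simp [hbw])
        intro z hzS hzw u hu hus
        rw [Finset.mem_singleton] at hzw
        exact hclose z hzS hzw u hu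
    -- edge coverage
    have hvedge : ∀ u, G.Adj v u →
        s(v, u) ∈ A1.edges ∨ s(v, u) ∈ A2.edges ∨ s(v, u) ∈ A3.edges := by
      intro u hu
      have hum : u ∈ ({x1, x2, x3} : Finset V) := by
        rw [← hnbrv]; exact (G.mem_neighborFinset v u).mpr hu
      rcases Finset.mem_insert.mp hum with rfl | hum
      · exact Or.inl (by rw [Sym2.eq_swap]; exact he1)
      rcases Finset.mem_insert.mp hum with rfl | hum
      · exact Or.inr (Or.inl (by rw [Sym2.eq_swap]; exact he2))
      rw [Finset.mem_singleton] at hum; subst hum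
      exact Or.inr (Or.inr (by rw [Sym2.eq_swap]; exact he3))
    have hintedge : ∀ a u, a ≠ v → a ≠ w → G.Adj a u →
        s(a, u) ∈ A1.edges ∨ s(a, u) ∈ A2.edges ∨ s(a, u) ∈ A3.edges := by
      intro a u hav haw hau
      have hdz := Hdeg2 a hav haw
      rcases hcover a with h | h | h
      · exact Or.inl (path_internal_edges A1 hA1 h haw hav hdz hau)
      · exact Or.inr (Or.inl (path_internal_edges A2 hA2 h haw hav hdz hau))
      · exact Or.inr (Or.inr (path_internal_edges A3 hA3 h haw hav hdz hau))
    have hedgecover : ∀ e ∈ G.edgeSet, e ∈ A1.edges ∨ e ∈ A2.edges ∨ e ∈ A3.edges := by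
      intro e
      refine Sym2.ind (fun a b he => ?_) e
      have hab : G.Adj a b := he
      by_cases hav : a = v
      · subst hav; exact hvedge b hab
      by_cases hbv : b = v
      · subst hbv
        rw [Sym2.eq_swap]
        exact hvedge a hab.symm
      by_cases haw : a = w
      · rw [haw] at hab ⊢
        rw [Sym2.eq_swap]
        exact hintedge b w hbv hab.ne' hab.symm
      · exact hintedge a b hav haw hab
    -- edge disjointness
    have hdisjE : ∀ {x x' : V}, x ≠ x' → ∀ {A A' : G.Walk w v}, A.IsPath → A'.IsPath →
        s(x, v) ∈ A.edges → s(x', v) ∈ A'.edges → ∀ e ∈ A.edges, e ∈ A'.edges → False := by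
      intro x x' hxx' A A' hA hA' he he' e
      refine Sym2.ind (fun a b heA heA' => ?_) e
      have hab : G.Adj a b := A.edges_subset_edgeSet heA
      have haA : a ∈ A.support := Walk.fst_mem_support_of_mem_edges A heA
      have hbA : b ∈ A.support := Walk.snd_mem_support_of_mem_edges A heA
      have haA' : a ∈ A'.support := Walk.fst_mem_support_of_mem_edges A' heA'
      have hbA' : b ∈ A'.support := Walk.snd_mem_support_of_mem_edges A' heA'
      have hione := arms_internal_disjoint Hdeg2 hxx' hA hA' he he'
      rcases hione a haA haA' with rfl | rfl
      · rcases hione b hbA hbA' with rfl | rfl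
        · exact hab.ne rfl
        · have hx1 : x = b := edge_at_end A hA (by rw [Sym2.eq_swap]; exact he) heA
          have hx2 : x' = b := edge_at_end A' hA' (by rw [Sym2.eq_swap]; exact he') heA'
          exact hxx' (hx1.trans hx2.symm)
      · rcases hione b hbA hbA' with rfl | rfl
        · have hx1 : x = a := edge_at_end A hA (by rw [Sym2.eq_swap]; exact he)
            (by rw [Sym2.eq_swap]; exact heA)
          have hx2 : x' = a := edge_at_end A' hA' (by rw [Sym2.eq_swap]; exact he')
            (by rw [Sym2.eq_swap]; exact heA')
          exact hxx' (hx1.trans hx2.symm)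
        · exact hab.ne rfl
    -- length count
    have hcard1 : A1.edges.toFinset.card = A1.length := by
      rw [List.toFinset_card_of_nodup hA1.isTrail.edges_nodup, Walk.length_edges]
    have hcard2 : A2.edges.toFinset.card = A2.length := by
      rw [List.toFinset_card_of_nodup hA2.isTrail.edges_nodup, Walk.length_edges]
    have hcard3 : A3.edges.toFinset.card = A3.length := by
      rw [List.toFinset_card_of_nodup hA3.isTrail.edges_nodup, Walk.length_edges]
    have hd12' : Disjoint A1.edges.toFinset A2.edges.toFinset := by
      rw [Finset.disjoint_left]
      intro e he1' he2'
      exact hdisjE h12 hA1 hA2 he1 he2 e (List.mem_toFinset.mp he1') (List.mem_toFinset.mp he2')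
    have hd13' : Disjoint A1.edges.toFinset A3.edges.toFinset := by
      rw [Finset.disjoint_left]
      intro e he1' he3'
      exact hdisjE h13 hA1 hA3 he1 he3 e (List.mem_toFinset.mp he1') (List.mem_toFinset.mp he3')
    have hd23' : Disjoint A2.edges.toFinset A3.edges.toFinset := by
      rw [Finset.disjoint_left]
      intro e he2' he3'
      exact hdisjE h23 hA2 hA3 he2 he3 e (List.mem_toFinset.mp he2') (List.mem_toFinset.mp he3')
    have hefin : G.edgeFinset = A1.edges.toFinset ∪ A2.edges.toFinset ∪ A3.edges.toFinset := by
      ext e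
      simp only [mem_edgeFinset, Finset.mem_union, List.mem_toFinset]
      constructor
      · intro he
        rcases hedgecover e he with h | h | h
        · exact Or.inl (Or.inl h)
        · exact Or.inl (Or.inr h)
        · exact Or.inr h
      · rintro ((h | h) | h)
        · exact A1.edges_subset_edgeSet h
        · exact A2.edges_subset_edgeSet h
        · exact A3.edges_subset_edgeSet h
    have habc : A1.length + A2.length + A3.length = n + 1 := by
      have hcu : (A1.edges.toFinset ∪ A2.edges.toFinset ∪ A3.edges.toFinset).card
          = A1.length + A2.length + A3.length := by
        rw [Finset.card_union_of_disjoint (Finset.disjoint_union_left.mpr ⟨hd13', hd23'⟩),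
          Finset.card_union_of_disjoint hd12', hcard1, hcard2, hcard3]
      rw [← hefin, hEcard] at hcu
      omega
    refine ⟨A1.length, A2.length, A3.length, habc, v, w, hvw,
      A1.reverse, A2.reverse, A3.reverse,
      hA1.reverse, hA2.reverse, hA3.reverse,
      Walk.length_reverse _, Walk.length_reverse _, Walk.length_reverse _,
      ?_, ?_, ?_, ?_, ?_, ?_, ?_, ?_⟩
    · intro z hz hz'
      rw [Walk.support_reverse, List.mem_reverse] at hz hz'
      exact hint12 z hz hz'
    · intro z hz hz'
      rw [Walk.support_reverse, List.mem_reverse] at hz hz'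
      exact hint13 z hz hz'
    · intro z hz hz'
      rw [Walk.support_reverse, List.mem_reverse] at hz hz'
      exact hint23 z hz hz'
    · intro e hzA hzB
      rw [Walk.edges_reverse, List.mem_reverse] at hzA hzB
      exact hdisjE h12 hA1 hA2 he1 he2 e hzA hzB
    · intro e hzA hzB
      rw [Walk.edges_reverse, List.mem_reverse] at hzA hzB
      exact hdisjE h13 hA1 hA3 he1 he3 e hzA hzB
    · intro e hzA hzB
      rw [Walk.edges_reverse, List.mem_reverse] at hzA hzB
      exact hdisjE h23 hA2 hA3 he2 he3 e hzA hzB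
    · intro z
      simp only [Walk.support_reverse, List.mem_reverse]
      exact hcover z
    · intro e he
      simp only [Walk.edges_reverse, List.mem_reverse]
      exact hedgecover e he
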